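/- Let g = [[a,b],[c,d]] be a square matrix of size m+n and h = [[p,q],[r,t]] a square matrix of size m+N over k. Then for every n×n matrix u over k: (diag(1_m,u)·g)∘h = diag(1_m,u,1_N)·(g∘h) and (g·diag(1_m,u))∘h = (g∘h)·diag(1_m,u,1_N); and for every N×N matrix u' over k: g∘(diag(1_m,u')·h) = diag(1_m,1_n,u')·(g∘h) and g∘(h·diag(1_m,u')) = (g∘h)·diag(1_m,1_n,u'). (These identities imply that the ∘-multiplication is well defined on conjugacy classes and on double cosets of the block groups {diag(1_m,u)}.) -/

import Mathlib

namespace Neretin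

open Matrix

/-- The `∘`-product of two block matrices `g = [[a,b],[c,d]]` (size `m + n`) and
`h = [[p,q],[r,t]]` (size `m + N`): the square matrix of size `m + n + N` whose 3×3
block form is `[[a·p, b, a·q], [c·p, d, c·q], [r, 0, t]]`. -/
def circ {k : Type*} [Field k] {m n N : Type*} [Fintype m]
    (a : Matrix m m k) (b : Matrix m n k) (c : Matrix n m k) (d : Matrix n n k)
    (p : Matrix m m k) (q : Matrix m N k) (r : Matrix N m k) (t : Matrix N N k) :
    Matrix (m ⊕ n ⊕ N) (m ⊕ n ⊕ N) k :=
  Matrix.fromBlocks (a * p) (Matrix.fromCols b (a * q))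
    (Matrix.fromRows (c * p) r) (Matrix.fromBlocks d (c * q) 0 t)

/-- The `∘`-product of two 2×2 block matrices. -/
def circM {k : Type*} [Field k] {m n N : Type*} [Fintype m]
    (g : Matrix (m ⊕ n) (m ⊕ n) k) (h : Matrix (m ⊕ N) (m ⊕ N) k) :
    Matrix (m ⊕ n ⊕ N) (m ⊕ n ⊕ N) k :=
  circ g.toBlocks₁₁ g.toBlocks₁₂ g.toBlocks₂₁ g.toBlocks₂₂
    h.toBlocks₁₁ h.toBlocks₁₂ h.toBlocks₂₁ h.toBlocks₂₂

lemma circM_fromBlocks {k : Type*} [Field k] {m n N : Type*} [Fintype m]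
    (a : Matrix m m k) (b : Matrix m n k) (c : Matrix n m k) (d : Matrix n n k)
    (p : Matrix m m k) (q : Matrix m N k) (r : Matrix N m k) (t : Matrix N N k) :
    circM (Matrix.fromBlocks a b c d) (Matrix.fromBlocks p q r t)
      = circ a b c d p q r t := by
  simp [circM]

/-- Multiplying `g` (resp. `h`) on either side by `diag(1_m, u)` has the
effect of multiplying `g∘h` on the corresponding side by `diag(1_m, u, 1_N)` (resp. by
`diag(1_m, 1_n, u')`); hence `∘` is well defined on conjugacy classes and on double
cosets with respect to the subgroups `{diag(1_m, u)}`. -/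
theorem circ_biinvariance (k : Type*) [Field k] (m n N : ℕ)
    (g : Matrix (Fin m ⊕ Fin n) (Fin m ⊕ Fin n) k)
    (h : Matrix (Fin m ⊕ Fin N) (Fin m ⊕ Fin N) k) :
    (∀ u : Matrix (Fin n) (Fin n) k,
      circM (Matrix.fromBlocks 1 0 0 u * g) h
        = Matrix.fromBlocks 1 0 0 (Matrix.fromBlocks u 0 0 1) * circM g h ∧
      circM (g * Matrix.fromBlocks 1 0 0 u) h
        = circM g h * Matrix.fromBlocks 1 0 0 (Matrix.fromBlocks u 0 0 1)) ∧
    (∀ u' : Matrix (Fin N) (Fin N) k,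
      circM g (Matrix.fromBlocks 1 0 0 u' * h)
        = Matrix.fromBlocks 1 0 0 (Matrix.fromBlocks 1 0 0 u') * circM g h ∧
      circM g (h * Matrix.fromBlocks 1 0 0 u')
        = circM g h * Matrix.fromBlocks 1 0 0 (Matrix.fromBlocks 1 0 0 u')) := by
  obtain ⟨a, b, c, d, rfl⟩ : ∃ a b c d, g = Matrix.fromBlocks a b c d :=
    ⟨_, _, _, _, (Matrix.fromBlocks_toBlocks g).symm⟩
  obtain ⟨p, q, r, t, rfl⟩ : ∃ p q r t, h = Matrix.fromBlocks p q r t :=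
    ⟨_, _, _, _, (Matrix.fromBlocks_toBlocks h).symm⟩
  refine ⟨fun u => ⟨?_, ?_⟩, fun u' => ⟨?_, ?_⟩⟩ <;>
    simp [Matrix.fromBlocks_multiply, circM_fromBlocks, circ,
      Matrix.fromBlocks_mul_fromRows, Matrix.fromCols_mul_fromBlocks,
      Matrix.mul_assoc]

end Neretin
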